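/- Explicit sos certificate for scaled cube in cube: for r = 1/√d, the identity 1 - x^T z = (1/2) Σ_{i=1}^d (x_i - z_i)^2 + 2^{-(d+1)} Σ_{v ∈ {-1,1}^d} (1 + v^T z)^2 (1 - v^T z) + (1/(4r)) Σ_{i=1}^d [(r + x_i)^2 (r - x_i) + (r - x_i)^2 (r + x_i)] holds in R[x,z]. -/

import Mathlib

open Matrix Finset

private def sgn {d : ℕ} (s : Fin d → Bool) (i : Fin d) : ℝ := if s i then 1 else -1

private lemma sgn_not {d : ℕ} (s : Fin d → Bool) (i : Fin d) :
    sgn (fun j => !(s j)) i = - sgn s i := by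
  unfold sgn; cases h : s i <;> simp [h]

private def negE (d : ℕ) : (Fin d → Bool) ≃ (Fin d → Bool) where
  toFun s i := !(s i)
  invFun s i := !(s i)
  left_inv s := by funext i; simp
  right_inv s := by funext i; simp

private lemma sum_sign_odd {d : ℕ} (z : Fin d → ℝ) (g : ℝ → ℝ)
    (hg : ∀ t, g (-t) = - g t) :
    ∑ s : Fin d → Bool, g (∑ i, sgn s i * z i) = 0 := by
  have key : ∀ s : Fin d → Bool,
      (∑ i, sgn (negE d s) i * z i) = -∑ i, sgn s i * z i := by
    intro s
    simp only [negE, Equiv.coe_fn_mk, sgn_not, neg_mul]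
    exact Finset.sum_neg_distrib _
  have h := Fintype.sum_equiv (negE d) (fun s => g (∑ i, sgn s i * z i))
      (fun s => - g (∑ i, sgn s i * z i)) (fun s => ?_)
  · have h2 : ∑ s : Fin d → Bool, - g (∑ i, sgn s i * z i)
        = - ∑ s : Fin d → Bool, g (∑ i, sgn s i * z i) := Finset.sum_neg_distrib _
    rw [h2] at h; linarith
  · show g (∑ i, sgn s i * z i) = - g (∑ i, sgn (negE d s) i * z i)
    rw [key, hg]; ring

private def flipE {d : ℕ} (i : Fin d) : (Fin d → Bool) ≃ (Fin d → Bool) where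
  toFun s := Function.update s i (!(s i))
  invFun s := Function.update s i (!(s i))
  left_inv s := by
    funext j
    by_cases h : j = i
    · subst h; simp
    · simp [Function.update_of_ne h]
  right_inv s := by
    funext j
    by_cases h : j = i
    · subst h; simp
    · simp [Function.update_of_ne h]

private lemma sum_sign_cross {d : ℕ} (i j : Fin d) (hij : i ≠ j) :
    ∑ s : Fin d → Bool, sgn s i * sgn s j = 0 := by
  have h := Fintype.sum_equiv (flipE i) (fun s => sgn s i * sgn s j)
      (fun s => - (sgn s i * sgn s j)) (fun s => ?_)
  · rw [Finset.sum_neg_distrib] at h; linarith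
  · show sgn s i * sgn s j = - (sgn (flipE i s) i * sgn (flipE i s) j)
    have h1 : sgn (flipE i s) i = - sgn s i := by
      simp [flipE, sgn, Function.update_self]
      cases s i <;> simp
    have h2 : sgn (flipE i s) j = sgn s j := by
      simp [flipE, sgn, Function.update_of_ne (Ne.symm hij)]
    rw [h1, h2]; ring

private lemma sum_sign_sq {d : ℕ} (z : Fin d → ℝ) :
    ∑ s : Fin d → Bool, (∑ i, sgn s i * z i) ^ 2
      = 2 ^ d * ∑ i, (z i) ^ 2 := by
  have expand : ∀ s : Fin d → Bool,
      (∑ i, sgn s i * z i) ^ 2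
        = ∑ i, ∑ j, (sgn s i * sgn s j) * (z i * z j) := by
    intro s
    rw [sq, Finset.sum_mul_sum]
    exact Finset.sum_congr rfl fun i _ => Finset.sum_congr rfl fun j _ => by ring
  simp_rw [expand]
  rw [Finset.sum_comm]
  have swap : ∀ i : Fin d, ∑ s : Fin d → Bool, ∑ j, (sgn s i * sgn s j) * (z i * z j)
      = ∑ j, ∑ s : Fin d → Bool, (sgn s i * sgn s j) * (z i * z j) := fun i => by rw [Finset.sum_comm]
  simp_rw [swap]
  have inner : ∀ i j : Fin d, ∑ s : Fin d → Bool, (sgn s i * sgn s j) * (z i * z j)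
      = (if i = j then (2:ℝ)^d * (z i)^2 else 0) := by
    intro i j
    by_cases h : i = j
    · subst h
      have : ∀ s : Fin d → Bool, (sgn s i * sgn s i) * (z i * z i) = (z i)^2 := by
        intro s; unfold sgn; cases s i <;> simp <;> ring
      simp_rw [this]
      simp [Finset.sum_const, Finset.card_univ]
    · rw [← Finset.sum_mul, sum_sign_cross i j h]
      simp [h]
  simp_rw [inner]
  simp [Finset.mul_sum]

theorem scaled_cube_in_cube_sos_identity
    {d : ℕ} (hd : 0 < d) (r : ℝ) (hr : r = 1 / Real.sqrt d) (x z : Fin d → ℝ) :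
    1 - x ⬝ᵥ z =
      (1 / 2) * (∑ i : Fin d, (x i - z i) ^ 2)
      + (2 : ℝ) ^ (-(d : ℤ) - 1) *
          ∑ s : Fin d → Bool,
            (1 + (fun i => if s i then (1 : ℝ) else -1) ⬝ᵥ z) ^ 2 *
            (1 - (fun i => if s i then (1 : ℝ) else -1) ⬝ᵥ z)
      + (1 / (4 * r)) * ∑ i : Fin d,
          ((r + x i) ^ 2 * (r - x i) + (r - x i) ^ 2 * (r + x i)) := by
  -- basic facts about r
  have hd0 : (0:ℝ) < d := Nat.cast_pos.mpr hd
  have hsq : Real.sqrt d > 0 := Real.sqrt_pos.mpr hd0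
  have hrpos : 0 < r := by rw [hr]; positivity
  have hr2 : r ^ 2 = 1 / d := by
    rw [hr]; rw [div_pow, one_pow, Real.sq_sqrt hd0.le]
  have hdr2 : (d:ℝ) * r ^ 2 = 1 := by
    rw [hr2]; field_simp
  -- the middle sum
  have hdot : ∀ s : Fin d → Bool,
      (fun i => if s i then (1 : ℝ) else -1) ⬝ᵥ z = ∑ i, sgn s i * z i := by
    intro s; simp [dotProduct, sgn]
  have hmid : (∑ s : Fin d → Bool,
      (1 + (fun i => if s i then (1 : ℝ) else -1) ⬝ᵥ z) ^ 2 *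
      (1 - (fun i => if s i then (1 : ℝ) else -1) ⬝ᵥ z))
      = 2 ^ d - 2 ^ d * ∑ i, (z i) ^ 2 := by
    simp_rw [hdot]
    have expand : ∀ s : Fin d → Bool,
        (1 + ∑ i, sgn s i * z i) ^ 2 * (1 - ∑ i, sgn s i * z i)
          = 1 + ((∑ i, sgn s i * z i) + -((∑ i, sgn s i * z i))^3) - (∑ i, sgn s i * z i)^2 := by
      intro s; ring
    simp_rw [expand]
    rw [Finset.sum_sub_distrib, Finset.sum_add_distrib]
    rw [sum_sign_odd z (fun t => t + -(t^3)) (fun t => by ring), sum_sign_sq]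
    simp [Finset.card_univ]
  rw [hmid]
  -- the third sum
  have hthird : (∑ i : Fin d, ((r + x i) ^ 2 * (r - x i) + (r - x i) ^ 2 * (r + x i)))
      = ∑ i : Fin d, (2*r^3 - 2*r*(x i)^2) := by
    exact Finset.sum_congr rfl fun i _ => by ring
  rw [hthird, Finset.sum_sub_distrib]
  have hdotxz : x ⬝ᵥ z = ∑ i, x i * z i := rfl
  have hpow : (2 : ℝ) ^ (-(d : ℤ) - 1) * (2:ℝ) ^ d = 1/2 := by
    rw [← zpow_natCast (2:ℝ) d, ← zpow_add₀ (two_ne_zero)]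
    have he : (-(d:ℤ) - 1) + d = -1 := by ring
    rw [he]
    norm_num
  have hsumsq : ∑ i : Fin d, (x i - z i)^2
      = ∑ i, (x i)^2 - 2 * ∑ i, x i * z i + ∑ i, (z i)^2 := by
    have e1 : ∀ i : Fin d, (x i - z i)^2 = (x i)^2 - 2*(x i * z i) + (z i)^2 :=
      fun i => by ring
    rw [Finset.sum_congr rfl (fun i _ => e1 i), Finset.sum_add_distrib,
      Finset.sum_sub_distrib]
    try rw [Finset.mul_sum]

  rw [hsumsq, hdotxz]
  have hconst : ∑ _i : Fin d, 2*r^3 = (d:ℝ) * (2*r^3) := by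
    simp [Finset.sum_const, Finset.card_univ]; try ring
  rw [hconst]
  have hxsq : ∑ i : Fin d, 2*r*(x i)^2 = 2*r*∑ i, (x i)^2 := by
    rw [Finset.mul_sum]
  rw [hxsq]
  have hrne : r ≠ 0 := ne_of_gt hrpos
  have key : (d:ℝ) * (2*r^3) = 2*r := by
    have : (d:ℝ) * (2*r^3) = 2*r*((d:ℝ)*r^2) := by ring
    rw [this, hdr2]; ring
  rw [key]
  have hm : (2:ℝ)^(-(d:ℤ)-1) * ((2:ℝ)^d - (2:ℝ)^d * ∑ i, (z i)^2)
      = 1/2 - 1/2 * ∑ i, (z i)^2 := by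
    rw [mul_sub, ← mul_assoc, hpow]
  rw [hm]
  field_simp
  ring
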